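/- For every positive integer k and real σ > 0, the 2k-th moment φ(log^{2k} Y) = (2k)! Σ_{i=0}^{2k} f_i σ^{4k-2i}/(2^{2k-i}(2k-i)!), with f_0 = 1 and f_i = Σ_{j=⌈i/2⌉}^{i} s(j+1, i+1-j) σ^{2j}/(j!(j+1)!) for i ≥ 1, is a polynomial in σ² whose lowest-order term is C_k · σ^{2k}, where C_k is the k-th Catalan number. -/

import Mathlib

open Finset

/-- Signed Stirling numbers of the first kind, via the recurrence
`s(n+1, k+1) = s(n, k) - n·s(n, k+1)`. -/
def stirlingFirst : ℕ → ℕ → ℤ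
  | 0, 0 => 1
  | 0, _ + 1 => 0
  | _ + 1, 0 => 0
  | n + 1, k + 1 => stirlingFirst n k - n * stirlingFirst n (k + 1)

/-- The coefficients `f_i` (depending on `σ`): `f_0 = 1` and
`f_i = Σ_{j=⌈i/2⌉}^{i} s(j+1, i+1-j) σ^{2j}/(j!(j+1)!)` for `i ≥ 1`. -/
noncomputable def fCoef (σ : ℝ) : ℕ → ℝ
  | 0 => 1
  | i + 1 =>
    ∑ j ∈ Finset.Icc ((i + 2) / 2) (i + 1),
      (stirlingFirst (j + 1) (i + 2 - j) : ℝ) * σ ^ (2 * j) / (j.factorial * (j + 1).factorial)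

/-- The `2k`-th moment `φ(log^{2k} Y)` expressed by the closed formula. -/
noncomputable def logMoment (k : ℕ) (σ : ℝ) : ℝ :=
  ((2 * k).factorial : ℝ) *
    ∑ i ∈ Finset.range (2 * k + 1),
      fCoef σ i * σ ^ (4 * k - 2 * i) / (2 ^ (2 * k - i) * ((2 * k - i).factorial : ℝ))

lemma stirlingFirst_eq_zero : ∀ {n k : ℕ}, n < k → stirlingFirst n k = 0 := by
  intro n
  induction n with
  | zero => intro k h; cases k with
    | zero => omega
    | succ k => rfl
  | succ n ih =>
    intro k h
    cases k with
    | zero => omega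
    | succ k =>
      rw [stirlingFirst, ih (by omega), ih (by omega)]
      ring

lemma stirlingFirst_self : ∀ n : ℕ, stirlingFirst n n = 1 := by
  intro n
  induction n with
  | zero => rfl
  | succ n ih =>
    rw [stirlingFirst, ih, stirlingFirst_eq_zero (by omega)]
    ring

lemma factorial_two_mul' (k : ℕ) :
    (2 * k).factorial = catalan k * (k.factorial * (k + 1).factorial) := by
  have h1 := succ_mul_catalan_eq_centralBinom k
  have h2 := Nat.choose_mul_factorial_mul_factorial (show k ≤ 2 * k by omega)
  have h3 : 2 * k - k = k := by omega
  rw [h3] at h2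
  rw [Nat.centralBinom] at h1
  rw [Nat.factorial_succ]
  rw [← h2, ← h1]; ring

lemma key_sum (k : ℕ) (σ : ℝ) :
    ∑ i ∈ range (2 * k), ∑ j ∈ Finset.Icc ((i + 2) / 2) (i + 1),
      ((2 * k).factorial : ℝ) *
        ((stirlingFirst (j + 1) (i + 2 - j) : ℝ) * σ ^ (2 * j) /
          (j.factorial * (j + 1).factorial) * σ ^ (4 * k - 2 * (i + 1)) /
          (2 ^ (2 * k - (i + 1)) * ((2 * k - (i + 1)).factorial : ℝ)))
    = ∑ m ∈ range (k + 1), ∑ i ∈ Finset.Icc (max 1 (2 * (k - m))) (2 * k),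
        ((2 * k).factorial : ℝ) * (stirlingFirst (i + m - k + 1) (k - m + 1) : ℝ) /
          ((i + m - k).factorial * ((i + m - k + 1).factorial : ℝ) * 2 ^ (2 * k - i) *
            ((2 * k - i).factorial : ℝ)) * σ ^ (2 * k + 2 * m) := by
  rw [Finset.sum_sigma', Finset.sum_sigma']
  refine Finset.sum_nbij' (fun p => ⟨p.2 + k - (p.1 + 1), p.1 + 1⟩)
    (fun p => ⟨p.2 - 1, p.2 + p.1 - k⟩) ?_ ?_ ?_ ?_ ?_
  · rintro ⟨a, b⟩ h
    simp only [Finset.mem_sigma, Finset.mem_range, Finset.mem_Icc, le_max_iff, max_le_iff] at h ⊢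
    omega
  · rintro ⟨a, b⟩ h
    simp only [Finset.mem_sigma, Finset.mem_range, Finset.mem_Icc, le_max_iff, max_le_iff] at h ⊢
    omega
  · rintro ⟨a, b⟩ h
    simp only [Finset.mem_sigma, Finset.mem_range, Finset.mem_Icc] at h
    have h1 : a + 1 - 1 = a := by omega
    have h2 : a + 1 + (b + k - (a + 1)) - k = b := by omega
    simp [h1, h2]
  · rintro ⟨a, b⟩ h
    simp only [Finset.mem_sigma, Finset.mem_range, Finset.mem_Icc, le_max_iff, max_le_iff] at h
    have h1 : b - 1 + 1 = b := by omega
    simp only [h1]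
    have h2 : b + a - k + k - b = a := by omega
    simp [h2]
  · rintro ⟨a, b⟩ h
    simp only [Finset.mem_sigma, Finset.mem_range, Finset.mem_Icc] at h
    obtain ⟨ha, hb1, hb2⟩ := h
    have e1 : a + 1 + (b + k - (a + 1)) - k = b := by omega
    have e2 : k - (b + k - (a + 1)) + 1 = a + 2 - b := by omega
    have e4 : 2 * k + 2 * (b + k - (a + 1)) = 2 * b + (4 * k - 2 * (a + 1)) := by omega
    simp only [e1, e2, e4, pow_add]
    ring

/-- `φ(log^{2k} Y)` is a polynomial in `σ²` with lowest-order term `C_k σ^{2k}`. -/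
theorem logMoment_lowest_term (k : ℕ) (hk : 0 < k) :
    ∃ c : ℕ → ℝ, c 0 = (catalan k : ℝ) ∧
      ∀ σ : ℝ, 0 < σ →
        logMoment k σ = ∑ i ∈ Finset.range (k + 1), c i * σ ^ (2 * k + 2 * i) := by
  refine ⟨fun m => (if m = k then (1 : ℝ) / 2 ^ (2 * k) else 0) +
      ∑ i ∈ Finset.Icc (max 1 (2 * (k - m))) (2 * k),
        ((2 * k).factorial : ℝ) * (stirlingFirst (i + m - k + 1) (k - m + 1) : ℝ) /
          ((i + m - k).factorial * ((i + m - k + 1).factorial : ℝ) * 2 ^ (2 * k - i) *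
            ((2 * k - i).factorial : ℝ)), ?_, ?_⟩
  · have h0 : (0 : ℕ) ≠ k := by omega
    simp only [if_neg h0, Nat.sub_zero, Nat.add_zero, zero_add]
    rw [max_eq_right (by omega : 1 ≤ 2 * k), Finset.Icc_self, Finset.sum_singleton]
    have e1 : 2 * k - k = k := by omega
    have e2 : 2 * k - 2 * k = 0 := by omega
    rw [e1, e2, stirlingFirst_self, factorial_two_mul' k]
    have hf1 : (k.factorial : ℝ) ≠ 0 := Nat.cast_ne_zero.2 k.factorial_ne_zero
    have hf2 : ((k + 1).factorial : ℝ) ≠ 0 := Nat.cast_ne_zero.2 (k + 1).factorial_ne_zero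
    push_cast
    field_simp
    simp
  · intro σ hσ
    have hfac : ((2 * k).factorial : ℝ) ≠ 0 := Nat.cast_ne_zero.2 (2 * k).factorial_ne_zero
    calc logMoment k σ
        = (∑ i ∈ range (2 * k), ∑ j ∈ Finset.Icc ((i + 2) / 2) (i + 1),
            ((2 * k).factorial : ℝ) *
              ((stirlingFirst (j + 1) (i + 2 - j) : ℝ) * σ ^ (2 * j) /
                (j.factorial * (j + 1).factorial) * σ ^ (4 * k - 2 * (i + 1)) /
                (2 ^ (2 * k - (i + 1)) * ((2 * k - (i + 1)).factorial : ℝ))))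
          + σ ^ (4 * k) / 2 ^ (2 * k) := by
          rw [logMoment, Finset.sum_range_succ', mul_add, Finset.mul_sum]
          congr 1
          · refine Finset.sum_congr rfl fun i _ => ?_
            rw [show fCoef σ (i + 1) = ∑ j ∈ Finset.Icc ((i + 2) / 2) (i + 1),
              (stirlingFirst (j + 1) (i + 2 - j) : ℝ) * σ ^ (2 * j) /
                (j.factorial * (j + 1).factorial) from rfl]
            rw [Finset.sum_mul, Finset.sum_div, Finset.mul_sum]
          · rw [show fCoef σ 0 = 1 from rfl]
            have h0 : 2 * k - 0 = 2 * k := rfl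
            have h1 : 4 * k - 2 * 0 = 4 * k := rfl
            rw [h0, h1]
            field_simp
      _ = (∑ m ∈ range (k + 1), ∑ i ∈ Finset.Icc (max 1 (2 * (k - m))) (2 * k),
            ((2 * k).factorial : ℝ) * (stirlingFirst (i + m - k + 1) (k - m + 1) : ℝ) /
              ((i + m - k).factorial * ((i + m - k + 1).factorial : ℝ) * 2 ^ (2 * k - i) *
                ((2 * k - i).factorial : ℝ)) * σ ^ (2 * k + 2 * m))
          + σ ^ (4 * k) / 2 ^ (2 * k) := by rw [key_sum]
      _ = _ := by
          simp only [add_mul, ite_mul, zero_mul, Finset.sum_add_distrib,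
            Finset.sum_ite_eq', Finset.mem_range]
          rw [if_pos (by omega : k < k + 1)]
          rw [add_comm]
          congr 1
          · rw [show 2 * k + 2 * k = 4 * k from by omega]
            ring
          · refine Finset.sum_congr rfl fun m _ => (Finset.sum_mul _ _ _).symm
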